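/- For any nonzero z ∈ R^N and any q ∈ (1,∞), ‖z‖₁/‖z‖_∞ ≤ s_q(z), i.e., the limiting sparsity measure s_∞(z) = ‖z‖₁/‖z‖_∞ lower bounds s_q(z). -/

import Mathlib

open Finset

/-- The `ℓ_q` quasi-norm `(∑ |z i|^q)^(1/q)` on `Fin N → ℝ`. -/
noncomputable def lqNorm {N : ℕ} (q : ℝ) (z : Fin N → ℝ) : ℝ :=
  (∑ i, |z i| ^ q) ^ (1 / q)

/-- The `ℓ_1` norm. -/
noncomputable def l1Norm {N : ℕ} (z : Fin N → ℝ) : ℝ := ∑ i, |z i|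

/-- The `ℓ_2` norm. -/
noncomputable def l2Norm {N : ℕ} (z : Fin N → ℝ) : ℝ := Real.sqrt (∑ i, (z i) ^ 2)

/-- The `q`-ratio sparsity `s_q(z) = (‖z‖₁/‖z‖_q)^(q/(q-1))`. -/
noncomputable def qSparsity {N : ℕ} (q : ℝ) (z : Fin N → ℝ) : ℝ :=
  (l1Norm z / lqNorm q z) ^ (q / (q - 1))

/-- Number of nonzero entries. -/
noncomputable def l0Norm {N : ℕ} (z : Fin N → ℝ) : ℕ :=
  (Finset.univ.filter fun i => z i ≠ 0).card

/-- Restriction of `z` to an index set `S` (zero outside `S`). -/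
noncomputable def restr {N : ℕ} (z : Fin N → ℝ) (S : Finset (Fin N)) : Fin N → ℝ :=
  fun i => if i ∈ S then z i else 0
theorem sInfty_le_qSparsity {N : ℕ} (z : Fin N → ℝ) (hz : z ≠ 0) (q : ℝ) (hq : 1 < q) :
    l1Norm z / (⨆ i, |z i|) ≤ qSparsity q z := by
  obtain ⟨i0, hi0⟩ : ∃ i, z i ≠ 0 := by
    by_contra h; push_neg at h; exact hz (funext h)
  have hN : Nonempty (Fin N) := ⟨i0⟩
  set M := ⨆ i, |z i| with hMdef
  set L := l1Norm z with hLdef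
  have hq0 : (0:ℝ) < q := by linarith
  have hMle : ∀ i, |z i| ≤ M := fun i =>
    le_ciSup (f := fun j => |z j|) (Set.Finite.bddAbove (Set.finite_range _)) i
  have hMpos : 0 < M := lt_of_lt_of_le (abs_pos.mpr hi0) (hMle i0)
  have hLpos : 0 < L := by
    refine Finset.sum_pos' (fun i _ => abs_nonneg _) ⟨i0, Finset.mem_univ _, abs_pos.mpr hi0⟩
  have hApos : 0 < ∑ i, |z i| ^ q :=
    Finset.sum_pos' (fun i _ => Real.rpow_nonneg (abs_nonneg _) _)
      ⟨i0, Finset.mem_univ _, Real.rpow_pos_of_pos (abs_pos.mpr hi0) _⟩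
  have hbound : ∑ i, |z i| ^ q ≤ M ^ (q-1) * L := by
    rw [hLdef, l1Norm, Finset.mul_sum]
    refine Finset.sum_le_sum fun i _ => ?_
    have key : |z i| ^ q = |z i| ^ (q-1) * |z i| := by
      have h1 : |z i| ^ (q-1) * |z i| ^ (1:ℝ) = |z i| ^ (q-1+1) :=
        (Real.rpow_add' (abs_nonneg _) (by linarith)).symm
      rw [Real.rpow_one, show q - 1 + 1 = q by ring] at h1
      exact h1.symm
    rw [key]
    exact mul_le_mul_of_nonneg_right
      (Real.rpow_le_rpow (abs_nonneg _) (hMle i) (by linarith)) (abs_nonneg _)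
  have hlqpos : 0 < lqNorm q z := by
    rw [lqNorm]; exact Real.rpow_pos_of_pos hApos _
  have hlqle : lqNorm q z ≤ (M ^ (q-1) * L) ^ (1/q) := by
    rw [lqNorm]
    exact Real.rpow_le_rpow hApos.le hbound (by positivity)
  have hBeq : (M ^ (q-1) * L) ^ (1/q) = M ^ ((q-1)/q) * L ^ (1/q) := by
    rw [Real.mul_rpow (by positivity) hLpos.le, ← Real.rpow_mul hMpos.le]
    congr 1; field_simp
  have hL1 : L ^ ((q-1)/q) * L ^ (1/q) = L := by
    rw [← Real.rpow_add hLpos]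
    rw [show (q-1)/q + 1/q = 1 by field_simp; ring]
    exact Real.rpow_one _
  have hcalc : L / (M ^ (q-1) * L) ^ (1/q) = (L / M) ^ ((q-1)/q) := by
    rw [hBeq, Real.div_rpow hLpos.le hMpos.le]
    rw [div_eq_div_iff (by positivity) (by positivity)]
    calc L * M ^ ((q-1)/q) = (L ^ ((q-1)/q) * L ^ (1/q)) * M ^ ((q-1)/q) := by rw [hL1]
      _ = L ^ ((q-1)/q) * (M ^ ((q-1)/q) * L ^ (1/q)) := by ring
  have hstep : (L / M) ^ ((q-1)/q) ≤ L / lqNorm q z := by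
    rw [← hcalc]
    exact div_le_div_of_nonneg_left hLpos.le hlqpos hlqle
  have hqne : q ≠ 0 := hq0.ne'
  have hq1 : q - 1 ≠ 0 := by linarith
  have hfinal : ((L / M) ^ ((q-1)/q)) ^ (q/(q-1)) = L / M := by
    rw [← Real.rpow_mul (by positivity), show (q-1)/q*(q/(q-1)) = 1 by field_simp,
      Real.rpow_one]
  rw [← hfinal, qSparsity]
  exact Real.rpow_le_rpow (by positivity) hstep (div_nonneg hq0.le (by linarith))
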